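/- arXiv:1309.2822 — 2 statements merged into one kernel-verified Lean document; each statement's English description precedes it below -/
import Mathlib

section
/- (Lions' lemma, abstract form of Lemma 5.9.) Let H be a real Hilbert space, let X_1, …, X_n be closed subspaces of H with orthogonal projections P_1, …, P_n, and set P := Σ_{i=1}^n P_i. Let c > 0 and let v ∈ H admit a representation v = Σ_{i=1}^n v_i with v_i ∈ X_i for each i and Σ_{i=1}^n ‖v_i‖² ≤ c^{-1} ‖v‖². Then ⟨Pv, v⟩ ≥ c ‖v‖². -/
/-- Lions' lemma (abstract form of Lemma 5.9): if `v = ∑ i, v i` with `v i ∈ X i`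
and `∑ i ‖v i‖² ≤ c⁻¹ ‖v‖²`, then the additive Schwarz operator `P = ∑ i, P i`
satisfies `⟨P v, v⟩ ≥ c ‖v‖²`. -/
theorem lions_lemma
    {H : Type*} [NormedAddCommGroup H] [InnerProductSpace ℝ H] [CompleteSpace H]
    (n : ℕ) (X : Fin n → Submodule ℝ H) (hX : ∀ i, IsClosed (X i : Set H))
    (P : Fin n → H →L[ℝ] H)
    (hmem : ∀ i v, P i v ∈ X i)
    (hproj : ∀ i v, ∀ w ∈ X i, (inner ℝ (v - P i v) w : ℝ) = 0)
    (c : ℝ) (hc : 0 < c) (v : H) (vdec : Fin n → H)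
    (hdecmem : ∀ i, vdec i ∈ X i)
    (hdecsum : v = ∑ i, vdec i)
    (hstable : ∑ i, ‖vdec i‖ ^ 2 ≤ c⁻¹ * ‖v‖ ^ 2) :
    c * ‖v‖ ^ 2 ≤ (inner ℝ ((∑ i, P i) v) v : ℝ) := by
  -- ⟨P v, v⟩ = ∑ ‖P i v‖²
  have happ : (∑ i, P i) v = ∑ i, P i v := by
    simp [ContinuousLinearMap.sum_apply]
  have hPi : ∀ i, (inner ℝ (P i v) v : ℝ) = ‖P i v‖ ^ 2 := by
    intro i
    have h0 := hproj i v (P i v) (hmem i v)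
    rw [inner_sub_left] at h0
    have : (inner ℝ (P i v) v : ℝ) = inner ℝ (P i v) (P i v) := by
      rw [real_inner_comm]; linarith
    rw [this, real_inner_self_eq_norm_sq]
  have hPv : (inner ℝ ((∑ i, P i) v) v : ℝ) = ∑ i, ‖P i v‖ ^ 2 := by
    rw [happ, sum_inner]
    exact Finset.sum_congr rfl fun i _ => hPi i
  set S : ℝ := ∑ i, ‖P i v‖ ^ 2 with hS
  have hSnonneg : 0 ≤ S := Finset.sum_nonneg fun i _ => sq_nonneg _
  -- ‖v‖² = ∑ ⟨P i v, vdec i⟩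
  have hkey : ‖v‖ ^ 2 = ∑ i, (inner ℝ (P i v) (vdec i) : ℝ) := by
    have h1 : ‖v‖ ^ 2 = ∑ i, (inner ℝ v (vdec i) : ℝ) := by
      rw [show ‖v‖ ^ 2 = (inner ℝ v v : ℝ) from (real_inner_self_eq_norm_sq v).symm,
        show (inner ℝ v v : ℝ) = inner ℝ v (∑ i, vdec i) from by rw [← hdecsum], inner_sum]
    rw [h1]
    refine Finset.sum_congr rfl fun i _ => ?_
    have h0 := hproj i v (vdec i) (hdecmem i)
    rw [inner_sub_left] at h0
    linarith
  -- Cauchy-Schwarz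
  have hCS : ‖v‖ ^ 2 ≤ ∑ i, ‖P i v‖ * ‖vdec i‖ := by
    rw [hkey]
    exact Finset.sum_le_sum fun i _ => real_inner_le_norm _ _
  have hCS2 : (∑ i, ‖P i v‖ * ‖vdec i‖) ^ 2 ≤ S * ∑ i, ‖vdec i‖ ^ 2 :=
    Finset.sum_mul_sq_le_sq_mul_sq Finset.univ _ _
  have hsumnn : 0 ≤ ∑ i, ‖P i v‖ * ‖vdec i‖ :=
    Finset.sum_nonneg fun i _ => mul_nonneg (norm_nonneg _) (norm_nonneg _)
  have h4 : (‖v‖ ^ 2) ^ 2 ≤ S * (c⁻¹ * ‖v‖ ^ 2) := by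
    calc (‖v‖ ^ 2) ^ 2 ≤ (∑ i, ‖P i v‖ * ‖vdec i‖) ^ 2 :=
          pow_le_pow_left₀ (sq_nonneg _) hCS 2
      _ ≤ S * ∑ i, ‖vdec i‖ ^ 2 := hCS2
      _ ≤ S * (c⁻¹ * ‖v‖ ^ 2) := mul_le_mul_of_nonneg_left hstable hSnonneg
  rw [hPv]
  rcases eq_or_lt_of_le (sq_nonneg ‖v‖) with h0 | h0
  · rw [← h0]; simpa using hSnonneg
  · have : c * ‖v‖ ^ 2 * ‖v‖ ^ 2 ≤ S * ‖v‖ ^ 2 := by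
      have := h4
      calc c * ‖v‖ ^ 2 * ‖v‖ ^ 2 = c * ((‖v‖ ^ 2) ^ 2) := by ring
        _ ≤ c * (S * (c⁻¹ * ‖v‖ ^ 2)) := by
            exact mul_le_mul_of_nonneg_left h4 hc.le
        _ = S * ‖v‖ ^ 2 := by field_simp
    exact le_of_mul_le_mul_right this h0
end

section
/- (Abstract upper bound for additive Schwarz operators, following the proof in Section 5.6.) Let H be a real Hilbert space, M ∈ ℕ, and let V_0 ⊆ V_1 ⊆ … ⊆ V_{M+1} be nested closed subspaces of H with orthogonal projections G_k onto V_k; set G_{−1} := 0. For m = 0, …, M let Q_m : H → H be a bounded self-adjoint linear operator with ⟨Q_m w, w⟩ ≥ 0 for all w ∈ H and with range contained in V_{m+1}, i.e. Q_m w ∈ V_{m+1} for all w ∈ H. Assume the strengthened Cauchy–Schwarz estimates: there is C > 0 such that ⟨Q_m w, w⟩ ≤ C · 2^{−(m+1−k)} ‖w‖² for all 0 ≤ m ≤ M, all 0 ≤ k ≤ m+1, and all w ∈ V_k. Then for every v ∈ V_{M+1} it holds Σ_{m=0}^M ⟨Q_m v, v⟩ ≤ C K² ‖v‖², where K := Σ_{j=0}^∞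 2^{−j/2} = (1 − 2^{−1/2})^{−1}. -/
open Finset

private lemma semiCS' {H : Type*} [NormedAddCommGroup H] [InnerProductSpace ℝ H]
    (T : H →L[ℝ] H) (hsym : ∀ v w : H, (inner ℝ (T v) w : ℝ) = inner ℝ v (T w))
    (hpos : ∀ w : H, 0 ≤ (inner ℝ (T w) w : ℝ)) (x y : H) :
    (inner ℝ (T x) y : ℝ) ≤ Real.sqrt (inner ℝ (T x) x) * Real.sqrt (inner ℝ (T y) y) := by
  have key : ∀ t : ℝ, 0 ≤ (inner ℝ (T y) y : ℝ) * (t * t)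
      + (2 * (inner ℝ (T x) y : ℝ)) * t + (inner ℝ (T x) x : ℝ) := by
    intro t
    have h := hpos (x + t • y)
    have hxy : (inner ℝ (T y) x : ℝ) = (inner ℝ (T x) y : ℝ) := by
      rw [hsym y x, real_inner_comm]
    simp only [map_add, map_smul, inner_add_add_self, inner_add_left, inner_add_right,
      inner_smul_left, inner_smul_right, starRingEnd_apply, star_trivial] at h ⊢
    rw [hxy] at h; nlinarith [h]
  have hd := discrim_le_zero key
  unfold discrim at hd
  have h2 : (inner ℝ (T x) y : ℝ) ^ 2 ≤ (inner ℝ (T x) x : ℝ) * (inner ℝ (T y) y : ℝ) := by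
    nlinarith [hd]
  calc (inner ℝ (T x) y : ℝ) ≤ |(inner ℝ (T x) y : ℝ)| := le_abs_self _
    _ = Real.sqrt ((inner ℝ (T x) y : ℝ) ^ 2) := (Real.sqrt_sq_eq_abs _).symm
    _ ≤ Real.sqrt ((inner ℝ (T x) x : ℝ) * (inner ℝ (T y) y : ℝ)) := Real.sqrt_le_sqrt h2
    _ = _ := Real.sqrt_mul (hpos x) _

/-- Abstract upper bound for additive Schwarz operators (Section 5.6): nested closed
subspaces `V 0 ⊆ … ⊆ V (M+1)` with orthogonal (Galerkin) projections `G k`,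
nonnegative self-adjoint operators `Q m` mapping into `V (m+1)` and satisfying the
strengthened Cauchy-Schwarz estimates `⟨Q m w, w⟩ ≤ C 2^{-(m+1-k)} ‖w‖²` on `V k`
for `k ≤ m+1`. Then `∑_{m=0}^M ⟨Q m v, v⟩ ≤ C K² ‖v‖²` for all `v ∈ V (M+1)`,
with `K = ∑_j 2^{-j/2} = (1 - 2^{-1/2})⁻¹ = (1 - (√2)⁻¹)⁻¹`. -/
theorem additive_schwarz_upper_bound
    {H : Type*} [NormedAddCommGroup H] [InnerProductSpace ℝ H] [CompleteSpace H]
    (M : ℕ) (V : ℕ → Submodule ℝ H)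
    (hclosed : ∀ k ≤ M + 1, IsClosed (V k : Set H))
    (hnested : ∀ k ≤ M, V k ≤ V (k + 1))
    (G : ℕ → H →L[ℝ] H)
    (hGmem : ∀ k ≤ M + 1, ∀ v : H, G k v ∈ V k)
    (hGproj : ∀ k ≤ M + 1, ∀ v : H, ∀ w ∈ V k, (inner ℝ (v - G k v) w : ℝ) = 0)
    (Q : ℕ → H →L[ℝ] H)
    (hQsym : ∀ m ≤ M, ∀ v w : H, (inner ℝ (Q m v) w : ℝ) = inner ℝ v (Q m w))
    (hQpos : ∀ m ≤ M, ∀ w : H, 0 ≤ (inner ℝ (Q m w) w : ℝ))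
    (hQrange : ∀ m ≤ M, ∀ w : H, Q m w ∈ V (m + 1))
    (C : ℝ) (hC : 0 < C)
    (hCS : ∀ m ≤ M, ∀ k ≤ m + 1, ∀ w ∈ V k,
      (inner ℝ (Q m w) w : ℝ) ≤ C * (1 / 2 : ℝ) ^ (m + 1 - k) * ‖w‖ ^ 2) :
    ∀ v ∈ V (M + 1),
      ∑ m ∈ Finset.range (M + 1), (inner ℝ (Q m v) v : ℝ)
        ≤ C * ((1 - (Real.sqrt 2)⁻¹)⁻¹) ^ 2 * ‖v‖ ^ 2 := by
  intro v hv
  -- the contraction rate r and the geometric constant K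
  set r : ℝ := (Real.sqrt 2)⁻¹ with hrdef
  have hs2 : (1:ℝ) < Real.sqrt 2 := by
    nlinarith [Real.sq_sqrt (by norm_num : (0:ℝ) ≤ 2), Real.sqrt_nonneg 2]
  have hr0 : 0 ≤ r := by positivity
  have hr1 : r < 1 := by
    rw [hrdef]
    exact inv_lt_one_of_one_lt₀ hs2
  have hrsq : r ^ 2 = 1 / 2 := by
    rw [hrdef, inv_pow, Real.sq_sqrt (by norm_num : (0:ℝ) ≤ 2)]
    norm_num
  set K : ℝ := (1 - r)⁻¹ with hKdef
  have hKpos : 0 < K := by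
    rw [hKdef]; exact inv_pos.mpr (by linarith)
  have hgeom : ∀ n, ∑ j ∈ range n, r ^ j ≤ K := by
    intro n
    calc ∑ j ∈ range n, r ^ j
        ≤ ∑' j : ℕ, r ^ j :=
          Summable.sum_le_tsum (range n) (fun i _ => pow_nonneg hr0 i)
            (summable_geometric_of_lt_one hr0 hr1)
      _ = K := tsum_geometric_of_lt_one hr0 hr1
  -- monotonicity of the subspaces
  have hVmono : ∀ i j, i ≤ j → j ≤ M + 1 → V i ≤ V j := by
    intro i j hij hj
    induction j with
    | zero => rw [Nat.le_zero.mp hij]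
    | succ n ih =>
      rcases Nat.lt_or_ge i (n+1) with h | h
      · exact le_trans (ih (Nat.lt_succ_iff.mp h) (by omega)) (hnested n (by omega))
      · rw [le_antisymm hij h]
  -- the orthogonal decomposition v = ∑ D k
  set g : ℕ → H := fun k => Nat.rec 0 (fun l _ => G l v) k with hgdef
  have hg0 : g 0 = 0 := rfl
  have hgs : ∀ l, g (l+1) = G l v := fun l => rfl
  set D : ℕ → H := fun k => g (k+1) - g k with hDdef
  -- v is fixed by the last projection
  have hGfix : G (M+1) v = v := by
    have hmem : v - G (M+1) v ∈ V (M+1) :=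
      Submodule.sub_mem _ hv (hGmem (M+1) le_rfl v)
    have hself : (inner ℝ (v - G (M+1) v) (v - G (M+1) v) : ℝ) = 0 :=
      hGproj (M+1) le_rfl v _ hmem
    rw [inner_self_eq_zero, sub_eq_zero] at hself
    exact hself.symm
  have hsumD : ∑ k ∈ range (M+2), D k = v := by
    rw [hDdef]
    rw [Finset.sum_range_sub g (M+2)]
    rw [hgs, hg0, sub_zero, hGfix]
  have hDmem : ∀ k ≤ M + 1, D k ∈ V k := by
    intro k hk
    rcases k with _ | l
    · show g 1 - g 0 ∈ V 0
      have h01 : g 1 = G 0 v := rfl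
      rw [hg0, h01, sub_zero]; exact hGmem 0 (by omega) v
    · show g (l+2) - g (l+1) ∈ V (l+1)
      rw [hgs, hgs]
      exact Submodule.sub_mem _ (hGmem (l+1) hk v)
        (hVmono l (l+1) (by omega) hk (hGmem l (by omega) v))
  have hDorthV : ∀ l, l + 1 ≤ M + 1 → ∀ u ∈ V l, (inner ℝ (D (l+1)) u : ℝ) = 0 := by
    intro l hl u hu
    have hrepr : D (l+1) = (v - G l v) - (v - G (l+1) v) := by
      show g (l+2) - g (l+1) = _
      rw [hgs, hgs]; abel
    rw [hrepr, inner_sub_left, hGproj l (by omega) v u hu,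
      hGproj (l+1) hl v u (hnested l (by omega) hu), sub_zero]
  have hDorth : ∀ j k, j ≤ M + 1 → k ≤ M + 1 → j ≠ k →
      (inner ℝ (D j) (D k) : ℝ) = 0 := by
    have base : ∀ j k, j < k → k ≤ M + 1 → (inner ℝ (D k) (D j) : ℝ) = 0 := by
      intro j k hjk hk
      rcases k with _ | l
      · omega
      · exact hDorthV l hk _ (hVmono j l (by omega) (by omega) (hDmem j (by omega)))
    intro j k hj hk hne
    rcases Nat.lt_or_ge j k with h | h
    · rw [real_inner_comm]; exact base j k h hk
    · exact base k j (by omega) hj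
  -- Pythagoras
  have hnorm : (∑ k ∈ range (M+2), ‖D k‖ ^ 2) = ‖v‖ ^ 2 := by
    have h1 : (inner ℝ v v : ℝ)
        = ∑ j ∈ range (M+2), ∑ k ∈ range (M+2), (inner ℝ (D j) (D k) : ℝ) := by
      conv_lhs => rw [← hsumD]
      rw [sum_inner]
      exact Finset.sum_congr rfl fun j _ => inner_sum _ _ _
    have h2 : ∀ j ∈ range (M+2),
        (∑ k ∈ range (M+2), (inner ℝ (D j) (D k) : ℝ)) = ‖D j‖ ^ 2 := by
      intro j hj
      rw [Finset.sum_eq_single_of_mem j hj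
        (fun k hk hkj => hDorth j k (by simp only [mem_range] at hj; omega)
          (by simp only [mem_range] at hk; omega) (Ne.symm hkj))]
      exact real_inner_self_eq_norm_sq _
    rw [← real_inner_self_eq_norm_sq v, h1, Finset.sum_congr rfl h2]
  -- the matrix a and the coefficients c
  set c : ℕ → ℝ := fun k => ‖D k‖ with hcdef
  have hc0 : ∀ k, 0 ≤ c k := fun k => norm_nonneg _
  set a : ℕ → ℕ → ℝ := fun m k => if k ≤ m + 1 then r ^ (m + 1 - k) else 0 with hadef
  have ha0 : ∀ m k, 0 ≤ a m k := by
    intro m k; rw [hadef]; dsimp only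
    split
    · exact pow_nonneg hr0 _
    · exact le_rfl
  have hrow : ∀ m, m ≤ M → ∑ k ∈ range (M+2), a m k ≤ K := by
    intro m hm
    rw [hadef]
    rw [← Finset.sum_filter]
    have hfe : (range (M+2)).filter (fun k => k ≤ m+1) = range (m+2) := by
      ext k; simp only [mem_filter, mem_range]; omega
    rw [hfe]
    calc ∑ k ∈ range (m+2), r^(m+1-k) = ∑ k ∈ range (m+2), r^k := by
          rw [← Finset.sum_range_reflect]
          exact Finset.sum_congr rfl fun j hj => by
            simp only [mem_range] at hj; congr 1; omega
      _ ≤ K := hgeom _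
  have hcol : ∀ k, ∑ m ∈ range (M+1), a m k ≤ K := by
    intro k
    rw [hadef, ← Finset.sum_filter]
    have hfe : (range (M+1)).filter (fun m => k ≤ m+1) = Finset.Ico (k-1) (M+1) := by
      ext m; simp only [mem_filter, mem_range, Finset.mem_Ico]; omega
    rw [hfe, Finset.sum_Ico_eq_sum_range]
    rcases Nat.eq_zero_or_pos k with hk | hk
    · subst hk
      calc ∑ j ∈ range (M+1-0), r^(0-1+j+1-0) ≤ ∑ j ∈ range (M+1-0), r^j := by
            apply Finset.sum_le_sum; intro j _
            exact pow_le_pow_of_le_one hr0 hr1.le (by omega)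
        _ ≤ K := hgeom _
    · calc ∑ j ∈ range (M+1-(k-1)), r^(k-1+j+1-k)
          = ∑ j ∈ range (M+1-(k-1)), r^j :=
            Finset.sum_congr rfl fun j _ => by congr 1; omega
        _ ≤ K := hgeom _
  -- per-level bound via strengthened Cauchy-Schwarz
  have hmain : ∀ m ≤ M, (inner ℝ (Q m v) v : ℝ)
      ≤ C * (∑ k ∈ range (M+2), a m k * c k) ^ 2 := by
    intro m hm
    set s : ℕ → ℝ := fun k => Real.sqrt (inner ℝ (Q m (D k)) (D k) : ℝ) with hsdef
    have hs0 : ∀ k, 0 ≤ s k := fun k => Real.sqrt_nonneg _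
    -- vanishing of high-level diagonal terms
    have hzero : ∀ k, m + 2 ≤ k → k ≤ M + 1 → (inner ℝ (Q m (D k)) (D k) : ℝ) = 0 := by
      intro k hk2 hk1
      rcases k with _ | l
      · omega
      · rw [real_inner_comm]
        exact hDorthV l hk1 _ (hVmono (m+1) l (by omega) (by omega)
          (hQrange m hm (D (l+1))))
    -- bound for the square roots
    have hsk : ∀ k ∈ range (M+2), s k ≤ Real.sqrt C * (a m k * c k) := by
      intro k hk
      simp only [mem_range] at hk
      rcases Nat.lt_or_ge (m+1) k with h | h
      · -- k ≥ m + 2 : everything vanishes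
        rw [hsdef]; dsimp only
        rw [hzero k (by omega) (by omega), Real.sqrt_zero, hadef]
        dsimp only
        rw [if_neg (by omega)]
        simp
      · -- k ≤ m + 1 : strengthened Cauchy-Schwarz
        have hb := hCS m hm k h (D k) (hDmem k (by omega))
        have heq : C * (1/2 : ℝ) ^ (m+1-k) * ‖D k‖ ^ 2
            = (Real.sqrt C * (r ^ (m+1-k) * ‖D k‖)) ^ 2 := by
          have h1 : (r ^ (m+1-k)) ^ 2 = (1/2 : ℝ) ^ (m+1-k) := by
            rw [← pow_mul, mul_comm, pow_mul, hrsq]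
          have h2 : Real.sqrt C ^ 2 = C := Real.sq_sqrt hC.le
          rw [mul_pow, mul_pow, h1, h2]; ring
        calc s k ≤ Real.sqrt (C * (1/2 : ℝ) ^ (m+1-k) * ‖D k‖ ^ 2) :=
              Real.sqrt_le_sqrt hb
          _ = Real.sqrt C * (r ^ (m+1-k) * ‖D k‖) := by
              rw [heq, Real.sqrt_sq (by positivity)]
          _ = Real.sqrt C * (a m k * c k) := by
              rw [hadef, hcdef]; dsimp only; rw [if_pos h]
    -- expansion of the quadratic form
    have hexp : (inner ℝ (Q m v) v : ℝ) ≤ (∑ k ∈ range (M+2), s k) ^ 2 := by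
      have h1 : (inner ℝ (Q m v) v : ℝ)
          = ∑ j ∈ range (M+2), ∑ k ∈ range (M+2), (inner ℝ (Q m (D j)) (D k) : ℝ) := by
        conv_lhs => rw [← hsumD]
        rw [map_sum, sum_inner]
        exact Finset.sum_congr rfl fun j _ => inner_sum _ _ _
      rw [h1, sq, Finset.sum_mul_sum]
      apply Finset.sum_le_sum; intro j _
      apply Finset.sum_le_sum; intro k _
      exact semiCS' (Q m) (hQsym m hm) (hQpos m hm) (D j) (D k)
    calc (inner ℝ (Q m v) v : ℝ) ≤ (∑ k ∈ range (M+2), s k) ^ 2 := hexp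
      _ ≤ (∑ k ∈ range (M+2), Real.sqrt C * (a m k * c k)) ^ 2 := by
          apply pow_le_pow_left₀ (Finset.sum_nonneg fun k _ => hs0 k)
          exact Finset.sum_le_sum hsk
      _ = C * (∑ k ∈ range (M+2), a m k * c k) ^ 2 := by
          rw [← Finset.mul_sum, mul_pow, Real.sq_sqrt hC.le]
  -- the combinatorial Schur-type estimate
  have key1 : ∀ m ≤ M, (∑ k ∈ range (M+2), a m k * c k) ^ 2
      ≤ K * ∑ k ∈ range (M+2), a m k * c k ^ 2 := by
    intro m hm
    have step1 : (∑ k ∈ range (M+2), a m k * c k) ^ 2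
        ≤ ∑ k ∈ range (M+2), ∑ l ∈ range (M+2),
            (a m k * a m l * c k ^ 2 / 2 + a m k * a m l * c l ^ 2 / 2) := by
      rw [sq, Finset.sum_mul_sum]
      apply Finset.sum_le_sum; intro k _
      apply Finset.sum_le_sum; intro l _
      nlinarith [mul_nonneg (mul_nonneg (ha0 m k) (ha0 m l)) (sq_nonneg (c k - c l))]
    have hswap : ∑ k ∈ range (M+2), ∑ l ∈ range (M+2), a m k * a m l * c l ^ 2 / 2
        = ∑ k ∈ range (M+2), ∑ l ∈ range (M+2), a m k * a m l * c k ^ 2 / 2 := by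
      rw [Finset.sum_comm]
      exact Finset.sum_congr rfl fun k _ => Finset.sum_congr rfl fun l _ => by ring
    have step2 : ∑ k ∈ range (M+2), ∑ l ∈ range (M+2),
          (a m k * a m l * c k ^ 2 / 2 + a m k * a m l * c l ^ 2 / 2)
        = ∑ k ∈ range (M+2), ∑ l ∈ range (M+2), a m k * a m l * c k ^ 2 := by
      rw [Finset.sum_congr rfl fun k _ => Finset.sum_add_distrib,
        Finset.sum_add_distrib, hswap]
      rw [← Finset.sum_add_distrib]
      exact Finset.sum_congr rfl fun k _ => by
        rw [← Finset.sum_add_distrib]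
        exact Finset.sum_congr rfl fun l _ => by ring
    have step3 : ∑ k ∈ range (M+2), ∑ l ∈ range (M+2), a m k * a m l * c k ^ 2
        ≤ K * ∑ k ∈ range (M+2), a m k * c k ^ 2 := by
      rw [Finset.mul_sum]
      apply Finset.sum_le_sum; intro k _
      have : ∑ l ∈ range (M+2), a m k * a m l * c k ^ 2
          = (a m k * c k ^ 2) * ∑ l ∈ range (M+2), a m l := by
        rw [Finset.mul_sum]
        exact Finset.sum_congr rfl fun l _ => by ring
      rw [this]
      calc (a m k * c k ^ 2) * ∑ l ∈ range (M+2), a m l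
          ≤ (a m k * c k ^ 2) * K :=
            mul_le_mul_of_nonneg_left (hrow m hm)
              (mul_nonneg (ha0 m k) (sq_nonneg _))
        _ = K * (a m k * c k ^ 2) := by ring
    calc (∑ k ∈ range (M+2), a m k * c k) ^ 2
        ≤ ∑ k ∈ range (M+2), ∑ l ∈ range (M+2),
            (a m k * a m l * c k ^ 2 / 2 + a m k * a m l * c l ^ 2 / 2) := step1
      _ = ∑ k ∈ range (M+2), ∑ l ∈ range (M+2), a m k * a m l * c k ^ 2 := step2
      _ ≤ K * ∑ k ∈ range (M+2), a m k * c k ^ 2 := step3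
  have key2 : ∑ m ∈ range (M+1), ∑ k ∈ range (M+2), a m k * c k ^ 2
      ≤ K * ∑ k ∈ range (M+2), c k ^ 2 := by
    rw [Finset.sum_comm, Finset.mul_sum]
    apply Finset.sum_le_sum; intro k _
    have : ∑ m ∈ range (M+1), a m k * c k ^ 2
        = (∑ m ∈ range (M+1), a m k) * c k ^ 2 := by rw [Finset.sum_mul]
    rw [this]
    exact mul_le_mul_of_nonneg_right (hcol k) (sq_nonneg _)
  -- put everything together
  calc ∑ m ∈ Finset.range (M + 1), (inner ℝ (Q m v) v : ℝ)
      ≤ ∑ m ∈ range (M+1), C * (∑ k ∈ range (M+2), a m k * c k) ^ 2 :=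
        Finset.sum_le_sum fun m hm => hmain m (by simp only [mem_range] at hm; omega)
    _ ≤ ∑ m ∈ range (M+1), C * (K * ∑ k ∈ range (M+2), a m k * c k ^ 2) :=
        Finset.sum_le_sum fun m hm =>
          mul_le_mul_of_nonneg_left
            (key1 m (by simp only [mem_range] at hm; omega)) hC.le
    _ = C * K * ∑ m ∈ range (M+1), ∑ k ∈ range (M+2), a m k * c k ^ 2 := by
        rw [Finset.mul_sum]
        exact Finset.sum_congr rfl fun m _ => by ring
    _ ≤ C * K * (K * ∑ k ∈ range (M+2), c k ^ 2) :=
        mul_le_mul_of_nonneg_left key2 (by positivity)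
    _ = C * K ^ 2 * ∑ k ∈ range (M+2), c k ^ 2 := by ring
    _ = C * K ^ 2 * ‖v‖ ^ 2 := by rw [hcdef]; dsimp only; rw [hnorm]
end
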